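/- Let R be a ring with finite Gorenstein global dimension, and let N be a Gorenstein projective R-module admitting a short exact sequence 0 → N → P → N → 0 with P projective. Then Ext^1_R(N, Q) = 0 for every projective R-module Q, and hence N is strongly Gorenstein projective. -/

import Mathlib

universe u

open LinearMap DirectSum

section Defs

variable (R : Type u) [CommRing R]

/-- `Ext¹_R(M, Q) = 0`, expressed by the splitting of all extensions of `M` by `Q`. -/
def Ext1Zero (M Q : Type u) [AddCommGroup M] [Module R M] [AddCommGroup Q] [Module R Q] :
    Prop :=
  ∀ (E : ModuleCat.{u} R) (i : Q →ₗ[R] E) (p : E →ₗ[R] M),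
    Function.Injective i → Function.Surjective p → LinearMap.range i = LinearMap.ker p →
      ∃ s : M →ₗ[R] E, p ∘ₗ s = LinearMap.id

/-- `Tor₁^R(M, N) = 0`, expressed via flat presentations of `N`:
for every surjection `p : F ↠ N` with `F` flat, `ker p ⊗ M → F ⊗ M` is injective. -/
def Tor1Zero (M N : Type u) [AddCommGroup M] [Module R M] [AddCommGroup N] [Module R N] :
    Prop :=
  ∀ (F : ModuleCat.{u} R), Module.Flat R F →
    ∀ p : F →ₗ[R] N, Function.Surjective p →
      Function.Injective (LinearMap.rTensor M (LinearMap.ker p).subtype)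

/-- `M` is strongly Gorenstein projective: there is an exact complex
`⋯ → P → P → P → ⋯` with a single projective `P` and single differential `f`,
which stays exact under `Hom(-, Q)` for every projective `Q`, and `M ≅ Im f`. -/
def IsSGProjective (M : Type u) [AddCommGroup M] [Module R M] : Prop :=
  ∃ P : ModuleCat.{u} R, Module.Projective R P ∧
    ∃ f : P →ₗ[R] P, f ∘ₗ f = 0 ∧ LinearMap.ker f = LinearMap.range f ∧
      Nonempty (M ≃ₗ[R] LinearMap.range f) ∧
      ∀ Q : ModuleCat.{u} R, Module.Projective R Q →
        ∀ g : P →ₗ[R] Q, g ∘ₗ f = 0 → ∃ h : P →ₗ[R] Q, g = h ∘ₗ f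

/-- `M` is strongly Gorenstein flat: there is an exact complex
`⋯ → F → F → F → ⋯` with a single flat `F` and single differential `f`,
which stays exact under `- ⊗ I` for every injective `I`, and `M ≅ Im f`. -/
def IsSGFlat (M : Type u) [AddCommGroup M] [Module R M] : Prop :=
  ∃ F : ModuleCat.{u} R, Module.Flat R F ∧
    ∃ f : F →ₗ[R] F, f ∘ₗ f = 0 ∧ LinearMap.ker f = LinearMap.range f ∧
      Nonempty (M ≃ₗ[R] LinearMap.range f) ∧
      ∀ I : ModuleCat.{u} R, Module.Injective R I →
        LinearMap.ker (LinearMap.rTensor I f) = LinearMap.range (LinearMap.rTensor I f)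

/-- `M` is Gorenstein projective: it is a syzygy of a totally acyclic complex of
projective modules. -/
def IsGProjective (M : Type u) [AddCommGroup M] [Module R M] : Prop :=
  ∃ (P : ℤ → ModuleCat.{u} R) (d : ∀ i : ℤ, P (i + 1) →ₗ[R] P i),
    (∀ i, Module.Projective R (P i)) ∧
    (∀ i, d i ∘ₗ d (i + 1) = 0) ∧
    (∀ i, LinearMap.ker (d i) = LinearMap.range (d (i + 1))) ∧
    Nonempty (M ≃ₗ[R] LinearMap.range (d 0)) ∧
    ∀ Q : ModuleCat.{u} R, Module.Projective R Q →
      ∀ (i : ℤ) (g : P (i + 1) →ₗ[R] Q), g ∘ₗ d (i + 1) = 0 →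
        ∃ h : P i →ₗ[R] Q, g = h ∘ₗ d i

/-- `M` is Gorenstein flat: it is a syzygy of an exact complex of flat modules
which stays exact under `- ⊗ I` for every injective `I`. -/
def IsGFlat (M : Type u) [AddCommGroup M] [Module R M] : Prop :=
  ∃ (F : ℤ → ModuleCat.{u} R) (d : ∀ i : ℤ, F (i + 1) →ₗ[R] F i),
    (∀ i, Module.Flat R (F i)) ∧
    (∀ i, d i ∘ₗ d (i + 1) = 0) ∧
    (∀ i, LinearMap.ker (d i) = LinearMap.range (d (i + 1))) ∧
    Nonempty (M ≃ₗ[R] LinearMap.range (d 0)) ∧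
    ∀ I : ModuleCat.{u} R, Module.Injective R I →
      ∀ i : ℤ, LinearMap.ker (LinearMap.rTensor I (d i)) =
        LinearMap.range (LinearMap.rTensor I (d (i + 1)))

/-- A class of `R`-modules is projectively resolving if it contains the projectives and,
in every short exact sequence `0 → A → B → C → 0` with `C` in the class, `A` is in the
class iff `B` is. -/
def ProjResolving (X : ModuleCat.{u} R → Prop) : Prop :=
  (∀ P : ModuleCat.{u} R, Module.Projective R P → X P) ∧
  ∀ (A B C : ModuleCat.{u} R) (i : A →ₗ[R] B) (p : B →ₗ[R] C),
    Function.Injective i → Function.Surjective p → LinearMap.range i = LinearMap.ker p →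
      X C → (X A ↔ X B)

/-- Gorenstein projective dimension at most `n`. -/
def GpdLE : ℕ → ModuleCat.{u} R → Prop
  | 0, M => IsGProjective R M
  | n + 1, M => ∃ (G : ModuleCat.{u} R) (p : G →ₗ[R] M),
      IsGProjective R G ∧ Function.Surjective p ∧ GpdLE n (ModuleCat.of R (LinearMap.ker p))

/-- Gorenstein flat dimension at most `n`. -/
def GfdLE : ℕ → ModuleCat.{u} R → Prop
  | 0, M => IsGFlat R M
  | n + 1, M => ∃ (G : ModuleCat.{u} R) (p : G →ₗ[R] M),
      IsGFlat R G ∧ Function.Surjective p ∧ GfdLE n (ModuleCat.of R (LinearMap.ker p))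

/-- Flat dimension at most `n`. -/
def FlatDimLE : ℕ → ModuleCat.{u} R → Prop
  | 0, M => Module.Flat R M
  | n + 1, M => ∃ (G : ModuleCat.{u} R) (p : G →ₗ[R] M),
      Module.Flat R G ∧ Function.Surjective p ∧ FlatDimLE n (ModuleCat.of R (LinearMap.ker p))

/-- Projective dimension at most `n`. -/
def ProjDimLE : ℕ → ModuleCat.{u} R → Prop
  | 0, M => Module.Projective R M
  | n + 1, M => ∃ (G : ModuleCat.{u} R) (p : G →ₗ[R] M),
      Module.Projective R G ∧ Function.Surjective p ∧
        ProjDimLE n (ModuleCat.of R (LinearMap.ker p))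

/-- `R` is a coherent ring: every finitely generated ideal is finitely presented. -/
def IsCoherent : Prop :=
  ∀ I : Ideal R, I.FG → Module.FinitePresentation R I

end Defs


section Aux
variable {R A B C : Type*} [CommRing R] [AddCommGroup A] [Module R A]
  [AddCommGroup B] [Module R B] [AddCommGroup C] [Module R C]

/-- Factor a map through a surjection whose kernel it kills. -/
theorem aux_factor (π : A →ₗ[R] B) (hπ : Function.Surjective π) (f : A →ₗ[R] C)
    (h : LinearMap.ker π ≤ LinearMap.ker f) : ∃ g : B →ₗ[R] C, g ∘ₗ π = f := by
  refine ⟨((LinearMap.ker π).liftQ f h) ∘ₗ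
    (LinearMap.quotKerEquivOfSurjective π hπ).symm.toLinearMap, ?_⟩
  ext a
  have h1 : (LinearMap.quotKerEquivOfSurjective π hπ) (Submodule.Quotient.mk a) = π a := by
    simp [LinearMap.quotKerEquivOfSurjective, LinearMap.quotKerEquivRange]
  have h2 : (LinearMap.quotKerEquivOfSurjective π hπ).symm (π a) = Submodule.Quotient.mk a := by
    rw [← h1, LinearEquiv.symm_apply_apply]
  simp [h2]

/-- Corestrict a map along an injection containing its range. -/
theorem aux_corestrict (j : C →ₗ[R] B) (hj : Function.Injective j) (t : A →ₗ[R] B)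
    (h : ∀ a, t a ∈ LinearMap.range j) : ∃ g : A →ₗ[R] C, j ∘ₗ g = t := by
  refine ⟨(LinearEquiv.ofInjective j hj).symm.toLinearMap ∘ₗ t.codRestrict _ h, ?_⟩
  ext a
  have : j ((LinearEquiv.ofInjective j hj).symm (t.codRestrict _ h a)) =
      ((LinearEquiv.ofInjective j hj) ((LinearEquiv.ofInjective j hj).symm (t.codRestrict _ h a)) : B) := by
    rw [LinearEquiv.ofInjective_apply]
  simp only [LinearMap.comp_apply, LinearEquiv.coe_coe, this, LinearEquiv.apply_symm_apply]
  rfl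

end Aux

theorem aux_ext1zero (R : Type u) [CommRing R] (N : Type u) [AddCommGroup N] [Module R N]
    (hN : IsGProjective R N) (Q : ModuleCat.{u} R) (hQ : Module.Projective R Q) :
    Ext1Zero R N Q := by
  obtain ⟨Pc, d, hproj, hd2, hex, ⟨eN⟩, hlift⟩ := hN
  -- the surjection π : Pc (0+1) → N with kernel ker (d 0)
  set π : Pc (0 + 1) →ₗ[R] N :=
    eN.symm.toLinearMap ∘ₗ (d 0).rangeRestrict with hπdef
  have hπsurj : Function.Surjective π :=
    eN.symm.surjective.comp (d 0).surjective_rangeRestrict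
  have hπapp : ∀ x, (eN (π x) : Pc 0) = d 0 x := by
    intro x
    show ((eN (eN.symm ((d 0).rangeRestrict x))) : Pc 0) = _
    rw [LinearEquiv.apply_symm_apply]; rfl
  have hπker : LinearMap.ker π = LinearMap.ker (d 0) := by
    ext x
    constructor
    · intro hx
      have : (eN (π x) : Pc 0) = 0 := by
        rw [show π x = 0 from hx]; simp
      rw [hπapp] at this
      exact this
    · intro hx
      have : (eN (π x) : Pc 0) = (eN 0 : Pc 0) := by rw [hπapp]; simpa using hx
      have := eN.injective (Subtype.ext this)
      simpa using this
  intro E i' p' hi' hp' he'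
  haveI := hproj (0 + 1)
  -- lift π through p'
  obtain ⟨φ, hφ⟩ := Module.projective_lifting_property p' π hp'
  -- φ ∘ d (0+1) lands in range i' = ker p'
  have hmem : ∀ x, φ (d (0 + 1) x) ∈ LinearMap.range i' := by
    intro x
    rw [he', LinearMap.mem_ker]
    have : p' (φ (d (0 + 1) x)) = π (d (0 + 1) x) := by
      rw [← LinearMap.comp_apply, hφ]
    rw [this]
    have hdd : d 0 (d (0 + 1) x) = 0 := by
      have := LinearMap.ext_iff.mp (hd2 0) x
      simpa using this
    have : d (0 + 1) x ∈ LinearMap.ker π := by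
      rw [hπker, LinearMap.mem_ker]; exact hdd
    exact this
  -- corestrict φ ∘ d (0+1) to Q
  obtain ⟨g', hg'⟩ := aux_corestrict i' hi' (φ ∘ₗ d (0 + 1)) (fun a => hmem a)
  -- g' ∘ d (0+1+1) = 0
  have hg'0 : g' ∘ₗ d (0 + 1 + 1) = 0 := by
    apply LinearMap.ext; intro x
    apply hi'
    have h1 : i' (g' (d (0 + 1 + 1) x)) = φ (d (0 + 1) (d (0 + 1 + 1) x)) := by
      have := LinearMap.ext_iff.mp hg' (d (0 + 1 + 1) x)
      simpa using this
    have h2 : d (0 + 1) (d (0 + 1 + 1) x) = 0 := by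
      have := LinearMap.ext_iff.mp (hd2 (0 + 1)) x
      simpa using this
    show i' ((g' ∘ₗ d (0 + 1 + 1)) x) = i' ((0 : Pc (0+1+1+1) →ₗ[R] Q) x)
    simp only [LinearMap.comp_apply, LinearMap.zero_apply, h1, h2, map_zero]
  -- lift: g' = h ∘ d (0+1)
  obtain ⟨h, hh⟩ := hlift Q hQ (0 + 1) g' hg'0
  -- corrected lift t := φ - i' ∘ h kills ker π
  set t : Pc (0 + 1) →ₗ[R] E := φ - i' ∘ₗ h with htdef
  have hker : LinearMap.ker π ≤ LinearMap.ker t := by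
    intro x hx
    rw [hπker, hex 0] at hx
    obtain ⟨y, rfl⟩ := hx
    have h1 : i' (g' y) = φ (d (0 + 1) y) := by
      have := LinearMap.ext_iff.mp hg' y; simpa using this
    have h2 : g' y = h (d (0 + 1) y) := by
      have := LinearMap.ext_iff.mp hh y; simpa using this
    simp only [LinearMap.mem_ker, htdef, LinearMap.sub_apply, LinearMap.comp_apply]
    rw [← h2, h1, sub_self]
  obtain ⟨s, hs⟩ := aux_factor π hπsurj t hker
  refine ⟨s, ?_⟩
  apply LinearMap.ext; intro n
  obtain ⟨x, rfl⟩ := hπsurj n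
  have hsx : s (π x) = t x := LinearMap.ext_iff.mp hs x
  have hpi' : p' (i' (h x)) = 0 := by
    have : i' (h x) ∈ LinearMap.ker p' := he' ▸ ⟨h x, rfl⟩
    exact this
  have hpφ : p' (φ x) = π x := LinearMap.ext_iff.mp hφ x
  show p' (s (π x)) = LinearMap.id (π x)
  rw [hsx, htdef]
  simp only [LinearMap.sub_apply, LinearMap.comp_apply, map_sub, hpφ, hpi', sub_zero,
    LinearMap.id_apply]

/-- Extension of maps along an injection with cokernel N, given Ext1Zero. -/

theorem aux_extend (R : Type u) [CommRing R] (N : Type u) [AddCommGroup N] [Module R N]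
    (P : ModuleCat.{u} R)
    (i : N →ₗ[R] P) (p : P →ₗ[R] N)
    (hi : Function.Injective i) (hp : Function.Surjective p)
    (he : LinearMap.range i = LinearMap.ker p)
    (Q : ModuleCat.{u} R) (hext : Ext1Zero R N Q)
    (g' : N →ₗ[R] Q) : ∃ h : P →ₗ[R] Q, h ∘ₗ i = g' := by
  have hpi : ∀ x, p (i x) = 0 := by
    intro x
    have : i x ∈ LinearMap.ker p := he ▸ ⟨x, rfl⟩
    exact this
  -- pushout
  set W : Submodule R (Q × P) := LinearMap.range (g'.prod (-i)) with hW
  set E : ModuleCat.{u} R := ModuleCat.of R ((Q × P) ⧸ W) with hE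
  set j : Q →ₗ[R] E := W.mkQ ∘ₗ LinearMap.inl R Q P with hj
  have hWle : W ≤ LinearMap.ker (p ∘ₗ LinearMap.snd R Q P) := by
    rintro ⟨q, y⟩ ⟨x, hx⟩
    simp only [LinearMap.prod_apply, Function.prod, Prod.mk.injEq, LinearMap.neg_apply] at hx
    simp only [LinearMap.mem_ker, LinearMap.comp_apply, LinearMap.snd_apply, ← hx.2,
      map_neg, hpi, neg_zero]
  set p'' : E →ₗ[R] N := W.liftQ (p ∘ₗ LinearMap.snd R Q P) hWle with hp''
  have hp''mk : ∀ q y, p'' (Submodule.Quotient.mk (q, y)) = p y := fun q y => rfl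
  have hjmk : ∀ q, j q = Submodule.Quotient.mk (q, 0) := fun q => rfl
  have hjinj : Function.Injective j := by
    intro a b hab
    have hab' : ((a, 0) : Q × P) - (b, 0) ∈ W := by
      rw [← Submodule.Quotient.eq]
      rw [hjmk, hjmk] at hab
      exact hab
    obtain ⟨x, hx⟩ := hab'
    simp only [LinearMap.prod_apply, Function.prod, LinearMap.neg_apply, Prod.mk_sub_mk,
      Prod.mk.injEq, sub_zero] at hx
    have hx2 : i x = 0 := by rw [← neg_eq_zero, hx.2]
    have hx0 : x = 0 := hi (by simpa using hx2)
    rw [hx0, map_zero] at hx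
    exact sub_eq_zero.mp hx.1.symm
  have hp''surj : Function.Surjective p'' := by
    intro n
    obtain ⟨y, rfl⟩ := hp n
    exact ⟨Submodule.Quotient.mk (0, y), rfl⟩
  have hrk : LinearMap.range j = LinearMap.ker p'' := by
    ext e
    constructor
    · rintro ⟨q, rfl⟩
      show p'' (j q) = 0
      rw [hjmk, hp''mk, map_zero]
    · intro hke
      obtain ⟨⟨q, y⟩, rfl⟩ := Submodule.mkQ_surjective W e
      have hyp : p y = 0 := hke
      have : y ∈ LinearMap.range i := he ▸ hyp
      obtain ⟨x, rfl⟩ := this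
      refine ⟨q + g' x, ?_⟩
      rw [hjmk]
      show Submodule.Quotient.mk (q + g' x, 0) = Submodule.Quotient.mk (q, i x)
      rw [Submodule.Quotient.eq]
      exact ⟨x, by simp [Prod.ext_iff]⟩
  obtain ⟨s, hs⟩ := hext E j p'' hjinj hp''surj hrk
  -- t : P → E
  set jr : P →ₗ[R] E := (W.mkQ ∘ₗ LinearMap.inr R Q P : P →ₗ[R] E) with hjr
  have hjrmk : ∀ y : P, jr y = Submodule.Quotient.mk ((0 : Q), y) := fun y => rfl
  set t : P →ₗ[R] E := jr - s ∘ₗ p with ht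
  have htmk : ∀ y : P, t y = jr y - s (p y) := fun y => rfl
  have htr : ∀ y, t y ∈ LinearMap.range j := by
    intro y
    rw [hrk, LinearMap.mem_ker]
    have h2 : p'' (s (p y)) = p y := LinearMap.ext_iff.mp hs (p y)
    rw [htmk, map_sub, hjrmk, hp''mk, h2, sub_self]
  obtain ⟨h, hh⟩ := aux_corestrict j hjinj t htr
  refine ⟨h, ?_⟩
  apply LinearMap.ext; intro x
  apply hjinj
  have h1 : j (h (i x)) = t (i x) := LinearMap.ext_iff.mp hh (i x)
  have h2 : t (i x) = jr (i x) := by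
    rw [htmk, hpi, map_zero, sub_zero]
  show j (h (i x)) = j (g' x)
  rw [h1, h2, hjrmk, hjmk]
  rw [Submodule.Quotient.eq]
  exact ⟨-x, by simp [Prod.ext_iff]⟩


/-- Over a ring of finite Gorenstein global dimension, a Gorenstein projective
module `N` admitting a short exact sequence `0 → N → P → N → 0` with `P` projective
satisfies `Ext¹_R(N, Q) = 0` for every projective `Q`, hence is strongly Gorenstein
projective. -/
theorem stmt8 (R : Type u) [CommRing R]
    (hgl : ∃ n : ℕ, ∀ M : ModuleCat.{u} R, GpdLE R n M)
    (N : Type u) [AddCommGroup N] [Module R N] (hN : IsGProjective R N)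
    (P : ModuleCat.{u} R) (hP : Module.Projective R P)
    (i : N →ₗ[R] P) (p : P →ₗ[R] N)
    (hi : Function.Injective i) (hp : Function.Surjective p)
    (he : LinearMap.range i = LinearMap.ker p) :
    (∀ Q : ModuleCat.{u} R, Module.Projective R Q → Ext1Zero R N Q) ∧
      IsSGProjective R N := by
  have key : ∀ Q : ModuleCat.{u} R, Module.Projective R Q → Ext1Zero R N Q :=
    fun Q hQ => aux_ext1zero R N hN Q hQ
  refine ⟨key, P, hP, i ∘ₗ p, ?_, ?_, ?_, ?_⟩
  · -- f ∘ f = 0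
    apply LinearMap.ext; intro x
    have hpi : p (i (p x)) = 0 := by
      have : i (p x) ∈ LinearMap.ker p := he ▸ ⟨p x, rfl⟩
      exact this
    simp only [LinearMap.comp_apply, LinearMap.zero_apply, hpi, map_zero]
  · -- ker = range
    have hker : LinearMap.ker (i ∘ₗ p) = LinearMap.ker p := by
      rw [LinearMap.ker_comp, LinearMap.ker_eq_bot.mpr hi, Submodule.comap_bot]
    have hrange : LinearMap.range (i ∘ₗ p) = LinearMap.range i := by
      rw [LinearMap.range_comp, LinearMap.range_eq_top.mpr hp, Submodule.map_top]
    rw [hker, hrange, he]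
  · -- N ≃ range (i ∘ p)
    have hrange : LinearMap.range (i ∘ₗ p) = LinearMap.range i := by
      rw [LinearMap.range_comp, LinearMap.range_eq_top.mpr hp, Submodule.map_top]
    exact ⟨(LinearEquiv.ofInjective i hi).trans (LinearEquiv.ofEq _ _ hrange.symm)⟩
  · -- lifting property
    intro Q hQ g hg
    have hgi : ∀ x : N, g (i x) = 0 := by
      intro x
      obtain ⟨y, hy⟩ := hp x
      calc g (i x) = (g ∘ₗ (i ∘ₗ p)) y := by rw [← hy]; rfl
        _ = 0 := by rw [hg]; rfl
    have hkle : LinearMap.ker p ≤ LinearMap.ker g := by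
      intro x hx
      have : x ∈ LinearMap.range i := he ▸ hx
      obtain ⟨n, rfl⟩ := this
      exact hgi n
    obtain ⟨g', hg'⟩ := aux_factor p hp g hkle
    obtain ⟨h, hh⟩ := aux_extend R N P i p hi hp he Q (key Q hQ) g'
    refine ⟨h, ?_⟩
    apply LinearMap.ext; intro x
    have h1 : h (i (p x)) = g' (p x) := LinearMap.ext_iff.mp hh (p x)
    have h2 : g' (p x) = g x := LinearMap.ext_iff.mp hg' x
    show g x = h (i (p x))
    rw [h1, h2]
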